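/- For any positive integers k_1,...,k_n, the set of points of the form (k_1 r_1, ..., k_n r_n) / (k_1 r_1 + ... + k_n r_n), where r_1,...,r_n range over the positive integers, is dense in the standard simplex {x ∈ ℝ^n : x_i ≥ 0, Σ x_i = 1}. -/

import Mathlib

open Filter Topology

theorem dense_rational_directions (n : ℕ) (hn : 0 < n) (k : Fin n → ℕ)
    (hk : ∀ i, 0 < k i) :
    {x : Fin n → ℝ | (∀ i, 0 ≤ x i) ∧ ∑ i, x i = 1} ⊆
      closure {x : Fin n → ℝ | ∃ r : Fin n → ℕ, (∀ i, 0 < r i) ∧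
        x = fun i => (k i * r i : ℝ) / ∑ j, (k j * r j : ℝ)} := by
  rintro x ⟨hx0, hx1⟩
  set r : ℕ → Fin n → ℕ := fun N i => ⌊(N : ℝ) * x i / k i⌋₊ + 1 with hrdef
  set a : ℕ → Fin n → ℝ := fun N i => (k i : ℝ) * (r N i) with hadef
  set S : ℕ → ℝ := fun N => ∑ j, a N j with hSdef
  have hkpos : ∀ i, (0:ℝ) < k i := fun i => by exact_mod_cast hk i
  have hlow : ∀ (N : ℕ) i, (N : ℝ) * x i ≤ a N i := by
    intro N i
    have h1 : (N : ℝ) * x i / k i < (r N i : ℝ) := by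
      have := Nat.lt_floor_add_one ((N : ℝ) * x i / k i)
      simp only [hrdef]; push_cast; linarith
    have := (div_lt_iff₀ (hkpos i)).mp h1
    simp only [hadef]; nlinarith [hkpos i]
  have hup : ∀ N i, a N i ≤ (N : ℝ) * x i + k i := by
    intro N i
    have hnn : 0 ≤ (N : ℝ) * x i / k i :=
      div_nonneg (mul_nonneg (Nat.cast_nonneg N) (hx0 i)) (hkpos i).le
    have h1 : (r N i : ℝ) ≤ (N : ℝ) * x i / k i + 1 := by
      have := Nat.floor_le hnn
      simp only [hrdef]; push_cast; linarith
    have : (k i : ℝ) * (r N i) ≤ (k i) * ((N : ℝ) * x i / k i + 1) :=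
      mul_le_mul_of_nonneg_left h1 (hkpos i).le
    calc a N i ≤ (k i) * ((N : ℝ) * x i / k i + 1) := this
      _ = (N : ℝ) * x i + k i := by rw [mul_add, mul_one, mul_div_cancel₀ _ (hkpos i).ne']
  have hSlow : ∀ N : ℕ, (N : ℝ) ≤ S N := by
    intro N
    have : ∑ i, (N : ℝ) * x i ≤ S N := Finset.sum_le_sum fun i _ => hlow N i
    calc (N : ℝ) = ∑ i, (N : ℝ) * x i := by rw [← Finset.mul_sum, hx1, mul_one]
      _ ≤ S N := this
  have hSup : ∀ N, S N ≤ (N : ℝ) + ∑ i, (k i : ℝ) := by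
    intro N
    have : S N ≤ ∑ i, ((N : ℝ) * x i + k i) := Finset.sum_le_sum fun i _ => hup N i
    calc S N ≤ ∑ i, ((N : ℝ) * x i + k i) := this
      _ = (N : ℝ) + ∑ i, (k i : ℝ) := by
          rw [Finset.sum_add_distrib, ← Finset.mul_sum, hx1, mul_one]
  -- a N i / N → x i
  have hdivN : ∀ i, Tendsto (fun N : ℕ => a N i / N) atTop (𝓝 (x i)) := by
    intro i
    have hlim : Tendsto (fun N : ℕ => x i + (k i : ℝ) / N) atTop (𝓝 (x i)) := by
      have := tendsto_natCast_atTop_atTop (R := ℝ)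
      have h2 : Tendsto (fun N : ℕ => (k i : ℝ) / N) atTop (𝓝 0) :=
        Tendsto.div_atTop tendsto_const_nhds this
      simpa using tendsto_const_nhds.add h2
    refine tendsto_of_tendsto_of_tendsto_of_le_of_le' tendsto_const_nhds hlim ?_ ?_
    · filter_upwards [eventually_ge_atTop 1] with N hN
      have hNpos : (0:ℝ) < N := by exact_mod_cast hN
      rw [le_div_iff₀ hNpos]
      have := hlow N i; linarith
    · filter_upwards [eventually_ge_atTop 1] with N hN
      have hNpos : (0:ℝ) < N := by exact_mod_cast hN
      rw [div_le_iff₀ hNpos]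
      have := hup N i
      have : a N i ≤ (N : ℝ) * x i + k i := this
      calc a N i ≤ (N : ℝ) * x i + k i := this
        _ = (x i + (k i : ℝ) / N) * N := by field_simp
  -- S N / N → 1
  have hSN : Tendsto (fun N : ℕ => S N / N) atTop (𝓝 1) := by
    have hlim : Tendsto (fun N : ℕ => 1 + (∑ i, (k i : ℝ)) / N) atTop (𝓝 1) := by
      have := tendsto_natCast_atTop_atTop (R := ℝ)
      have h2 : Tendsto (fun N : ℕ => (∑ i, (k i : ℝ)) / N) atTop (𝓝 0) :=
        Tendsto.div_atTop tendsto_const_nhds this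
      simpa using tendsto_const_nhds.add h2
    refine tendsto_of_tendsto_of_tendsto_of_le_of_le' tendsto_const_nhds hlim ?_ ?_
    · filter_upwards [eventually_ge_atTop 1] with N hN
      have hNpos : (0:ℝ) < N := by exact_mod_cast hN
      rw [le_div_iff₀ hNpos]
      have := hSlow N; linarith
    · filter_upwards [eventually_ge_atTop 1] with N hN
      have hNpos : (0:ℝ) < N := by exact_mod_cast hN
      rw [div_le_iff₀ hNpos]
      have := hSup N
      calc S N ≤ (N : ℝ) + ∑ i, (k i : ℝ) := this
        _ = (1 + (∑ i, (k i : ℝ)) / N) * N := by field_simp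
  -- the approximating sequence
  have hy : Tendsto (fun N : ℕ => fun i => a N i / S N) atTop (𝓝 x) := by
    rw [tendsto_pi_nhds]
    intro i
    have h := (hdivN i).div hSN one_ne_zero
    simp only [div_one] at h
    refine h.congr' ?_
    filter_upwards [eventually_ge_atTop 1] with N hN
    have hNpos : (0:ℝ) < N := by exact_mod_cast hN
    have hSpos : 0 < S N := lt_of_lt_of_le hNpos (hSlow N)
    simp only [Pi.div_apply]
    field_simp
  refine mem_closure_of_tendsto hy ?_
  filter_upwards with N
  exact ⟨r N, fun i => Nat.succ_pos _, by
    funext i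
    simp only [hadef, hSdef]⟩
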